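/- Let K be a finite commutative ring with identity. Then for every n ∈ ℕ the quotient group R(K)/R^n(K) is finite. Moreover, if K = F_q is a finite field of characteristic p (p prime), then the order of R(F_q)/R^n(F_q) is a power of p, i.e. each quotient R(F_q)/R^n(F_q) is a finite p-group. -/

import Mathlib

open PowerSeries Finset

namespace RiordanPaper

variable {K : Type*} [CommRing K]

noncomputable def comp (f g : PowerSeries K) : PowerSeries K :=
  PowerSeries.mk fun n => ∑ d ∈ Finset.range (n + 1), coeff d f * coeff n (g ^ d)

lemma coeff_comp (f g : PowerSeries K) (n : ℕ) :
    coeff n (comp f g) = ∑ d ∈ Finset.range (n + 1), coeff d f * coeff n (g ^ d) := by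
  simp [comp]

lemma coeff_pow_eq_zero {g : PowerSeries K} (hg : constantCoeff g = 0) {n d : ℕ}
    (h : n < d) : coeff n (g ^ d) = 0 := by
  have hdvd : (X : PowerSeries K) ^ d ∣ g ^ d :=
    pow_dvd_pow_of_dvd (PowerSeries.X_dvd_iff.2 hg) d
  exact (PowerSeries.X_pow_dvd_iff.1 hdvd) n h

lemma coeff_comp_of_lt {g : PowerSeries K} (hg : constantCoeff g = 0)
    (f : PowerSeries K) {n N : ℕ} (hn : n < N) :
    coeff n (comp f g) = ∑ d ∈ Finset.range N, coeff d f * coeff n (g ^ d) := by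
  rw [coeff_comp]
  apply Finset.sum_subset
  · intro d hd
    simp only [Finset.mem_range] at hd ⊢
    omega
  · intro d _ hd'
    simp only [Finset.mem_range] at hd'
    rw [coeff_pow_eq_zero hg (by omega), mul_zero]

lemma coeff_eval₂ {g : PowerSeries K} (hg : constantCoeff g = 0)
    (P : Polynomial K) (n : ℕ) :
    coeff n (Polynomial.eval₂ C g P)
      = ∑ d ∈ Finset.range (n + 1), P.coeff d * coeff n (g ^ d) := by
  classical
  have h1 : P.natDegree < max (n + 1) (P.natDegree + 1) :=
    lt_of_lt_of_le (Nat.lt_succ_self _) (le_max_right _ _)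
  rw [Polynomial.eval₂_eq_sum_range' C h1 g, map_sum]
  have h2 : ∀ d ∈ Finset.range (max (n + 1) (P.natDegree + 1)),
      coeff n (C (P.coeff d) * g ^ d) = P.coeff d * coeff n (g ^ d) := fun d _ => by
    rw [coeff_C_mul]
  rw [Finset.sum_congr rfl h2]
  symm
  apply Finset.sum_subset
  · intro d hd
    simp only [Finset.mem_range] at hd ⊢
    omega
  · intro d _ hd'
    simp only [Finset.mem_range] at hd'
    rw [coeff_pow_eq_zero hg (by omega), mul_zero]

lemma coeff_comp_eq_eval₂_trunc {g : PowerSeries K} (hg : constantCoeff g = 0)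
    (f : PowerSeries K) {n N : ℕ} (hn : n < N) :
    coeff n (comp f g) = coeff n (Polynomial.eval₂ C g (trunc N f)) := by
  rw [coeff_eval₂ hg, coeff_comp]
  apply Finset.sum_congr rfl
  intro d hd
  simp only [Finset.mem_range] at hd
  rw [PowerSeries.coeff_trunc, if_pos (by omega)]

lemma mul_comp {g : PowerSeries K} (hg : constantCoeff g = 0) (f₁ f₂ : PowerSeries K) :
    comp (f₁ * f₂) g = comp f₁ g * comp f₂ g := by
  ext n
  have key : coeff n (comp (f₁ * f₂) g)
      = coeff n (Polynomial.eval₂ C g (trunc (n + 1) f₁ * trunc (n + 1) f₂)) := by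
    rw [coeff_eval₂ hg, coeff_comp]
    apply Finset.sum_congr rfl
    intro d hd
    simp only [Finset.mem_range] at hd
    congr 1
    rw [Polynomial.coeff_mul, PowerSeries.coeff_mul]
    apply Finset.sum_congr rfl
    intro ab hab
    rw [Finset.HasAntidiagonal.mem_antidiagonal] at hab
    rw [PowerSeries.coeff_trunc, PowerSeries.coeff_trunc, if_pos (by omega), if_pos (by omega)]
  rw [key, Polynomial.eval₂_mul, PowerSeries.coeff_mul, PowerSeries.coeff_mul]
  apply Finset.sum_congr rfl
  intro ab hab
  rw [Finset.HasAntidiagonal.mem_antidiagonal] at hab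
  rw [← coeff_comp_eq_eval₂_trunc hg f₁ (show ab.1 < n + 1 by omega),
    ← coeff_comp_eq_eval₂_trunc hg f₂ (show ab.2 < n + 1 by omega)]

lemma one_comp (g : PowerSeries K) : comp (1 : PowerSeries K) g = 1 := by
  ext n
  rw [coeff_comp, Finset.sum_eq_single 0]
  · simp
  · intro d _ hd0
    simp [PowerSeries.coeff_one, hd0]
  · intro h
    simp at h

lemma comp_X (f : PowerSeries K) : comp f X = f := by
  ext n
  rw [coeff_comp, Finset.sum_eq_single n]
  · rw [coeff_X_pow, if_pos rfl, mul_one]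
  · intro d _ hdn
    rw [coeff_X_pow, if_neg (fun h => hdn h.symm), mul_zero]
  · intro h
    simp at h

lemma X_comp {g : PowerSeries K} (hg : constantCoeff g = 0) : comp X g = g := by
  ext n
  rcases Nat.eq_zero_or_pos n with hn | hn
  · subst hn
    rw [coeff_comp]
    simp [PowerSeries.coeff_X, coeff_zero_eq_constantCoeff_apply, hg]
  · rw [coeff_comp, Finset.sum_eq_single 1]
    · rw [coeff_one_X, pow_one, one_mul]
    · intro d _ hd1
      rw [PowerSeries.coeff_X, if_neg hd1, zero_mul]
    · intro h
      simp only [Finset.mem_range] at h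
      omega

lemma constantCoeff_comp (f g : PowerSeries K) :
    constantCoeff (comp f g) = constantCoeff f := by
  rw [← coeff_zero_eq_constantCoeff_apply, coeff_comp]
  simp

lemma coeff_one_comp (f g : PowerSeries K) :
    coeff 1 (comp f g) = coeff 1 f * coeff 1 g := by
  rw [coeff_comp]
  have : Finset.range 2 = {0, 1} := rfl
  rw [this, Finset.sum_insert (by simp), Finset.sum_singleton, pow_zero, pow_one]
  simp [PowerSeries.coeff_one]

lemma comp_assoc {g k : PowerSeries K} (hg : constantCoeff g = 0)
    (hk : constantCoeff k = 0) (f : PowerSeries K) :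
    comp (comp f g) k = comp f (comp g k) := by
  have hpow : ∀ e : ℕ, (comp g k) ^ e = comp (g ^ e) k := by
    intro e
    induction e with
    | zero => simp [one_comp]
    | succ m ih => rw [pow_succ, pow_succ, ih, mul_comp hk]
  ext n
  rw [coeff_comp, coeff_comp]
  have L1 : ∀ d ∈ Finset.range (n + 1), coeff d (comp f g) * coeff n (k ^ d)
      = ∑ e ∈ Finset.range (n + 1), coeff e f * coeff d (g ^ e) * coeff n (k ^ d) := by
    intro d hd
    simp only [Finset.mem_range] at hd
    rw [coeff_comp_of_lt hg f hd, Finset.sum_mul]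
  rw [Finset.sum_congr rfl L1, Finset.sum_comm]
  apply Finset.sum_congr rfl
  intro e _
  rw [hpow e, coeff_comp, Finset.mul_sum]
  apply Finset.sum_congr rfl
  intro d _
  ring

/-- An element of the Riordan group: a pair `(h, g)` with
`h = 1 + a₁x + ⋯` and `g = x + b₂x² + ⋯`. -/
@[ext]
structure RiordanElem (K : Type*) [CommRing K] where
  h : PowerSeries K
  g : PowerSeries K
  h_zero : constantCoeff h = 1
  g_zero : constantCoeff g = 0
  g_one : coeff 1 g = 1

namespace RiordanElem

noncomputable instance : Mul (RiordanElem K) :=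
  ⟨fun a b => ⟨a.h * comp b.h a.g, comp b.g a.g,
    by rw [map_mul, a.h_zero, one_mul, constantCoeff_comp, b.h_zero],
    by rw [constantCoeff_comp, b.g_zero],
    by rw [coeff_one_comp, b.g_one, a.g_one, one_mul]⟩⟩

noncomputable instance : One (RiordanElem K) :=
  ⟨⟨1, X, map_one _, constantCoeff_X, coeff_one_X⟩⟩

@[simp] lemma mul_h (a b : RiordanElem K) : (a * b).h = a.h * comp b.h a.g := rfl
@[simp] lemma mul_g (a b : RiordanElem K) : (a * b).g = comp b.g a.g := rfl
@[simp] lemma one_h : (1 : RiordanElem K).h = 1 := rfl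
@[simp] lemma one_g : (1 : RiordanElem K).g = X := rfl

noncomputable instance instMonoid : Monoid (RiordanElem K) where
  mul_assoc a b c := by
    ext1
    · show (a.h * comp b.h a.g) * comp c.h (comp b.g a.g)
        = a.h * comp (b.h * comp c.h b.g) a.g
      rw [mul_comp a.g_zero, ← comp_assoc b.g_zero a.g_zero, mul_assoc]
    · show comp c.g (comp b.g a.g) = comp (comp c.g b.g) a.g
      rw [comp_assoc b.g_zero a.g_zero]
  one_mul a := by
    ext1
    · show (1 : PowerSeries K) * comp a.h X = a.h
      rw [comp_X, one_mul]
    · show comp a.g X = a.g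
      exact comp_X a.g
  mul_one a := by
    ext1
    · show a.h * comp 1 a.g = a.h
      rw [one_comp, mul_one]
    · show comp X a.g = a.g
      exact X_comp a.g_zero

end RiordanElem

/-- The Riordan group over `K`, realized as the units of the Riordan monoid. -/
noncomputable abbrev RiordanGroup (K : Type*) [CommRing K] := (RiordanElem K)ˣ

/-- An element of the Nottingham group: `g = x + b₂x² + ⋯`. -/
@[ext]
structure NottinghamElem (K : Type*) [CommRing K] where
  g : PowerSeries K
  g_zero : constantCoeff g = 0
  g_one : coeff 1 g = 1

namespace NottinghamElem

noncomputable instance : Mul (NottinghamElem K) :=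
  ⟨fun a b => ⟨comp b.g a.g,
    by rw [constantCoeff_comp, b.g_zero],
    by rw [coeff_one_comp, b.g_one, a.g_one, one_mul]⟩⟩

noncomputable instance : One (NottinghamElem K) :=
  ⟨⟨X, constantCoeff_X, coeff_one_X⟩⟩

@[simp] lemma mul_g (a b : NottinghamElem K) : (a * b).g = comp b.g a.g := rfl
@[simp] lemma one_g : (1 : NottinghamElem K).g = X := rfl

noncomputable instance instMonoid : Monoid (NottinghamElem K) where
  mul_assoc a b c := by
    ext1
    show comp c.g (comp b.g a.g) = comp (comp c.g b.g) a.g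
    rw [comp_assoc b.g_zero a.g_zero]
  one_mul a := by
    ext1
    show comp a.g X = a.g
    exact comp_X a.g
  mul_one a := by
    ext1
    show comp X a.g = a.g
    exact X_comp a.g_zero

end NottinghamElem

/-- The Nottingham group over `K`, realized as the units of the Nottingham monoid. -/
noncomputable abbrev NottinghamGroup (K : Type*) [CommRing K] := (NottinghamElem K)ˣ

/-- `h` belongs to `H^n(K)`: the coefficients in degrees `1,…,n-1` vanish
(the constant-coefficient-one condition being imposed separately). -/
def IsHn (n : ℕ) (f : PowerSeries K) : Prop := ∀ i, 0 < i → i < n → coeff i f = 0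

/-- `g` belongs to `N^n(K)`: the coefficients in degrees `2,…,n` vanish
(the conditions at degree `0`, `1` being imposed separately). -/
def IsNn (n : ℕ) (g : PowerSeries K) : Prop := ∀ j, 1 < j → j ≤ n → coeff j g = 0

/-- The subset `R^{m,n}(K) = H^m(K) ⋊ N^n(K)` of the Riordan group. -/
def Rmn (K : Type*) [CommRing K] (m n : ℕ) : Set (RiordanGroup K) :=
  {u | IsHn m ((u : RiordanElem K).h) ∧ IsNn n ((u : RiordanElem K).g)}

/-- The subset `R^n(K) = H^n(K) ⋊ N^n(K)` of the Riordan group. -/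
def Rn (K : Type*) [CommRing K] (n : ℕ) : Set (RiordanGroup K) := Rmn K n n


/-! ### Auxiliary lemmas for the main theorem -/

lemma coeff_self_pow {g : PowerSeries K} (hg : constantCoeff g = 0) (m : ℕ) :
    coeff m (g ^ m) = (coeff 1 g) ^ m := by
  induction m with
  | zero => simp
  | succ m ih =>
    rw [pow_succ, PowerSeries.coeff_mul, Finset.sum_eq_single (m, 1)]
    · rw [ih, pow_succ]
    · rintro ⟨a, b⟩ hab hne
      rw [Finset.HasAntidiagonal.mem_antidiagonal] at hab
      rcases lt_trichotomy a m with h | h | h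
      · rw [coeff_pow_eq_zero hg h, zero_mul]
      · exfalso; apply hne
        have hb : b = 1 := by omega
        subst h; subst hb; rfl
      · have hb : b = 0 := by omega
        subst hb
        rw [coeff_zero_eq_constantCoeff_apply, hg, mul_zero]
    · intro h
      exact absurd (by simp : ((m, 1) : ℕ × ℕ) ∈ Finset.HasAntidiagonal.antidiagonal (m + 1)) h

noncomputable def licoeff (g : PowerSeries K) : ℕ → K
  | n => (if n = 1 then (1 : K) else 0) -
      ∑ d ∈ (Finset.range n).attach, licoeff g d * coeff n (g ^ (d : ℕ))
  decreasing_by exact Finset.mem_range.mp d.2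

lemma licoeff_eq (g : PowerSeries K) (n : ℕ) :
    licoeff g n = (if n = 1 then (1 : K) else 0) -
      ∑ d ∈ Finset.range n, licoeff g d * coeff n (g ^ d) := by
  rw [licoeff]
  congr 1
  exact Finset.sum_attach (Finset.range n) (fun d => licoeff g d * coeff n (g ^ d))

lemma licoeff_zero (g : PowerSeries K) : licoeff g 0 = 0 := by
  rw [licoeff_eq]; simp

lemma licoeff_one (g : PowerSeries K) : licoeff g 1 = 1 := by
  rw [licoeff_eq]
  simp [PowerSeries.coeff_one]

lemma comp_licoeff {g : PowerSeries K} (hg0 : constantCoeff g = 0) (hg1 : coeff 1 g = 1) :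
    comp (PowerSeries.mk (licoeff g)) g = X := by
  ext n
  rw [coeff_comp, Finset.sum_range_succ, coeff_mk, coeff_self_pow hg0, hg1, one_pow, mul_one,
    licoeff_eq]
  simp only [coeff_mk]
  rw [PowerSeries.coeff_X]
  ring

lemma exists_mul_inv {h : PowerSeries K} (hh : constantCoeff h = 1) :
    ∃ w : PowerSeries K, h * w = 1 ∧ constantCoeff w = 1 := by
  have hmul : h * PowerSeries.invOfUnit h 1 = 1 :=
    PowerSeries.mul_invOfUnit h 1 (by simpa using hh)
  refine ⟨PowerSeries.invOfUnit h 1, hmul, ?_⟩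
  have h2 := congrArg (constantCoeff) hmul
  rw [map_mul, hh, one_mul, map_one] at h2
  exact h2

lemma isUnit_of_forall_right_inv {M : Type*} [Monoid M] (H : ∀ a : M, ∃ b, a * b = 1)
    (a : M) : IsUnit a := by
  obtain ⟨b, hb⟩ := H a
  obtain ⟨c, hc⟩ := H b
  have hca : c = a := by
    calc c = 1 * c := (one_mul c).symm
      _ = (a * b) * c := by rw [hb]
      _ = a * (b * c) := mul_assoc _ _ _
      _ = a := by rw [hc, mul_one]
  have hba : b * a = 1 := by rw [← hca]; exact hc
  exact ⟨⟨a, b, hb, hba⟩, rfl⟩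

lemma riordan_right_inv (a : RiordanElem K) : ∃ b : RiordanElem K, a * b = 1 := by
  obtain ⟨w, hw, hw1⟩ := exists_mul_inv a.h_zero
  have hf0 : constantCoeff (PowerSeries.mk (licoeff a.g)) = 0 := by
    rw [← coeff_zero_eq_constantCoeff_apply, coeff_mk, licoeff_zero]
  have hf1 : coeff 1 (PowerSeries.mk (licoeff a.g)) = 1 := by
    rw [coeff_mk, licoeff_one]
  have hcomp : comp (PowerSeries.mk (licoeff a.g)) a.g = X := comp_licoeff a.g_zero a.g_one
  refine ⟨⟨comp w (PowerSeries.mk (licoeff a.g)), PowerSeries.mk (licoeff a.g),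
    by rw [constantCoeff_comp, hw1], hf0, hf1⟩, ?_⟩
  ext1
  · show a.h * comp (comp w (PowerSeries.mk (licoeff a.g))) a.g = 1
    rw [comp_assoc hf0 a.g_zero, hcomp, comp_X, hw]
  · show comp (PowerSeries.mk (licoeff a.g)) a.g = X
    exact hcomp

lemma riordan_isUnit (a : RiordanElem K) : IsUnit a :=
  isUnit_of_forall_right_inv riordan_right_inv a

/-! Forward coset lemmas -/

lemma comp_coeff_of_IsHn {n : ℕ} {w g : PowerSeries K}
    (hw : IsHn n w) {i : ℕ} (hi0 : 0 < i) (hin : i < n) :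
    coeff i (comp w g) = 0 := by
  rw [coeff_comp]
  apply Finset.sum_eq_zero
  intro d hd
  rw [Finset.mem_range] at hd
  rcases Nat.eq_zero_or_pos d with rfl | hd0
  · simp [PowerSeries.coeff_one, hi0.ne']
  · rw [hw d hd0 (by omega), zero_mul]

lemma mul_comp_coeff_of_IsHn {n : ℕ} {u h w : PowerSeries K}
    (hw1 : constantCoeff w = 1) (hw : IsHn n w) {i : ℕ} (hin : i < n) :
    coeff i (h * comp w u) = coeff i h := by
  rw [PowerSeries.coeff_mul, Finset.sum_eq_single (i, 0)]
  · rw [coeff_zero_eq_constantCoeff_apply, constantCoeff_comp, hw1, mul_one]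
  · rintro ⟨a, b⟩ hab hne
    rw [Finset.HasAntidiagonal.mem_antidiagonal] at hab
    have hb0 : 0 < b := by
      rcases Nat.eq_zero_or_pos b with rfl | hb
      · exfalso; apply hne; have : a = i := by omega
        subst this; rfl
      · exact hb
    rw [comp_coeff_of_IsHn hw hb0 (by omega), mul_zero]
  · intro h'
    exact absurd (by simp : ((i, 0) : ℕ × ℕ) ∈ Finset.HasAntidiagonal.antidiagonal i) h'

lemma comp_coeff_of_IsNn {n : ℕ} {w g : PowerSeries K} (hg : constantCoeff g = 0)
    (hw0 : constantCoeff w = 0) (hw1 : coeff 1 w = 1) (hw : IsNn n w)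
    {j : ℕ} (hj : j ≤ n) : coeff j (comp w g) = coeff j g := by
  rw [coeff_comp, Finset.sum_eq_single 1]
  · rw [hw1, pow_one, one_mul]
  · intro d hd hd1
    rw [Finset.mem_range] at hd
    rcases Nat.eq_zero_or_pos d with rfl | hd0
    · rw [coeff_zero_eq_constantCoeff_apply, hw0, zero_mul]
    · rw [hw d (by omega) (by omega), zero_mul]
  · intro h'
    rw [Finset.mem_range] at h'
    have : j = 0 := by omega
    subst this
    simp [pow_one, hg]

/-! Backward coset lemmas -/

lemma IsNn_of_comp {n : ℕ} {w u : PowerSeries K} (hu0 : constantCoeff u = 0)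
    (hu1 : coeff 1 u = 1) (hw0 : constantCoeff w = 0) (hw1 : coeff 1 w = 1)
    (heq : ∀ j ≤ n, coeff j (comp w u) = coeff j u) : IsNn n w := by
  suffices H : ∀ j, 1 < j → j ≤ n → coeff j w = 0 from H
  intro j
  induction j using Nat.strong_induction_on with
  | _ j ih =>
    intro hj1 hjn
    have h1 := heq j hjn
    rw [coeff_comp, Finset.sum_range_succ, coeff_self_pow hu0, hu1, one_pow, mul_one] at h1
    have h2 : ∑ d ∈ Finset.range j, coeff d w * coeff j (u ^ d) = coeff j u := by
      rw [Finset.sum_eq_single 1]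
      · rw [hw1, pow_one, one_mul]
      · intro d hd hd1
        rw [Finset.mem_range] at hd
        rcases Nat.eq_zero_or_pos d with rfl | hd0
        · rw [coeff_zero_eq_constantCoeff_apply, hw0, zero_mul]
        · rw [ih d hd (by omega) (by omega), zero_mul]
      · intro h'
        rw [Finset.mem_range] at h'
        omega
    rw [h2] at h1
    exact (add_eq_left).mp h1

lemma IsHn_of_comp {n : ℕ} {w u h0 : PowerSeries K} (hu0 : constantCoeff u = 0)
    (hu1 : coeff 1 u = 1) (hh0 : constantCoeff h0 = 1) (hw1 : constantCoeff w = 1)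
    (heq : ∀ i < n, coeff i (h0 * comp w u) = coeff i h0) : IsHn n w := by
  suffices H : ∀ i, 0 < i → i < n → coeff i w = 0 from H
  intro i
  induction i using Nat.strong_induction_on with
  | _ i ih =>
    intro hi0 hin
    have hFsmall : ∀ b, 0 < b → b < i → coeff b (comp w u) = 0 := by
      intro b hb0 hbi
      rw [coeff_comp]
      apply Finset.sum_eq_zero
      intro d hd
      rw [Finset.mem_range] at hd
      rcases Nat.eq_zero_or_pos d with rfl | hd0
      · simp [PowerSeries.coeff_one, hb0.ne']
      · rw [ih d (by omega) hd0 (by omega), zero_mul]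
    have hFi : coeff i (comp w u) = coeff i w := by
      rw [coeff_comp, Finset.sum_range_succ, coeff_self_pow hu0, hu1, one_pow, mul_one]
      rw [Finset.sum_eq_zero, zero_add]
      intro d hd
      rw [Finset.mem_range] at hd
      rcases Nat.eq_zero_or_pos d with rfl | hd0
      · simp [PowerSeries.coeff_one, hi0.ne']
      · rw [ih d hd hd0 (by omega), zero_mul]
    have h1 := heq i hin
    rw [PowerSeries.coeff_mul, Finset.Nat.sum_antidiagonal_eq_sum_range_succ_mk,
      Finset.sum_range_succ] at h1
    simp only [Nat.sub_self] at h1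
    rw [coeff_zero_eq_constantCoeff_apply, constantCoeff_comp, hw1, mul_one] at h1
    have h2 : ∑ a ∈ Finset.range i, coeff a h0 * coeff (i - a) (comp w u)
        = coeff i w := by
      rw [Finset.sum_eq_single 0]
      · rw [Nat.sub_zero, coeff_zero_eq_constantCoeff_apply, hh0, one_mul, hFi]
      · intro a ha ha0
        rw [Finset.mem_range] at ha
        rw [hFsmall (i - a) (by omega) (by omega), mul_zero]
      · intro h'
        rw [Finset.mem_range] at h'
        omega
    rw [h2] at h1
    exact (add_eq_right).mp h1


lemma quotient_equiv (K : Type*) [CommRing K] (n : ℕ) (Hn : Subgroup (RiordanGroup K))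
    (hcar : (Hn : Set (RiordanGroup K)) = Rn K n) :
    Nonempty ((RiordanGroup K ⧸ Hn) ≃
      (({i : ℕ // 0 < i ∧ i < n} → K) × ({j : ℕ // 1 < j ∧ j ≤ n} → K))) := by
  have hmem : ∀ x : RiordanGroup K, x ∈ Hn ↔
      IsHn n ((x : RiordanElem K)).h ∧ IsNn n ((x : RiordanElem K)).g := by
    intro x
    rw [← SetLike.mem_coe, hcar]
    exact Iff.rfl
  set T : RiordanGroup K → (({i : ℕ // 0 < i ∧ i < n} → K) × ({j : ℕ // 1 < j ∧ j ≤ n} → K)) :=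
    fun x => (fun i => coeff i ((x : RiordanElem K)).h,
      fun j => coeff j ((x : RiordanElem K)).g) with hT
  have hwd : ∀ u v : RiordanGroup K, u⁻¹ * v ∈ Hn → T u = T v := by
    intro u v hmemw
    obtain ⟨hH, hN⟩ := (hmem _).mp hmemw
    have hv : (v : RiordanElem K)
        = (u : RiordanElem K) * ((u⁻¹ * v : RiordanGroup K) : RiordanElem K) := by
      rw [← Units.val_mul, mul_inv_cancel_left]
    rw [hT]
    refine Prod.ext ?_ ?_
    · funext i
      show coeff i.1 ((u : RiordanElem K)).h = coeff i.1 ((v : RiordanElem K)).h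
      rw [hv, RiordanElem.mul_h,
        mul_comp_coeff_of_IsHn ((u⁻¹ * v : RiordanGroup K) : RiordanElem K).h_zero hH i.2.2]
    · funext j
      show coeff j.1 ((u : RiordanElem K)).g = coeff j.1 ((v : RiordanElem K)).g
      rw [hv, RiordanElem.mul_g,
        comp_coeff_of_IsNn ((u : RiordanElem K)).g_zero
          ((u⁻¹ * v : RiordanGroup K) : RiordanElem K).g_zero
          ((u⁻¹ * v : RiordanGroup K) : RiordanElem K).g_one hN j.2.2]
  let F : RiordanGroup K ⧸ Hn →
      (({i : ℕ // 0 < i ∧ i < n} → K) × ({j : ℕ // 1 < j ∧ j ≤ n} → K)) :=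
    fun q => Quotient.liftOn' q T (fun u v h => hwd u v (QuotientGroup.leftRel_apply.mp h))
  have hinj : Function.Injective F := by
    intro q1 q2
    refine Quotient.inductionOn₂' q1 q2 ?_
    intro u v hTeq
    have hTeq' : T u = T v := hTeq
    refine Quotient.sound' ?_
    rw [QuotientGroup.leftRel_apply, hmem]
    have hv : (v : RiordanElem K)
        = (u : RiordanElem K) * ((u⁻¹ * v : RiordanGroup K) : RiordanElem K) := by
      rw [← Units.val_mul, mul_inv_cancel_left]
    constructor
    · apply IsHn_of_comp ((u : RiordanElem K)).g_zero ((u : RiordanElem K)).g_one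
        ((u : RiordanElem K)).h_zero ((u⁻¹ * v : RiordanGroup K) : RiordanElem K).h_zero
      intro i hi
      have hco : coeff i ((v : RiordanElem K)).h = coeff i ((u : RiordanElem K)).h := by
        rcases Nat.eq_zero_or_pos i with rfl | hi0
        · rw [coeff_zero_eq_constantCoeff_apply, coeff_zero_eq_constantCoeff_apply,
            ((v : RiordanElem K)).h_zero, ((u : RiordanElem K)).h_zero]
        · exact (congrFun (congrArg Prod.fst hTeq') ⟨i, hi0, hi⟩).symm
      rw [← RiordanElem.mul_h, ← hv]
      exact hco
    · apply IsNn_of_comp ((u : RiordanElem K)).g_zero ((u : RiordanElem K)).g_one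
        ((u⁻¹ * v : RiordanGroup K) : RiordanElem K).g_zero
        ((u⁻¹ * v : RiordanGroup K) : RiordanElem K).g_one
      intro j hj
      have hco : coeff j ((v : RiordanElem K)).g = coeff j ((u : RiordanElem K)).g := by
        rcases Nat.lt_or_ge j 2 with hj2 | hj2
        · interval_cases j
          · rw [coeff_zero_eq_constantCoeff_apply, coeff_zero_eq_constantCoeff_apply,
              ((v : RiordanElem K)).g_zero, ((u : RiordanElem K)).g_zero]
          · rw [((v : RiordanElem K)).g_one, ((u : RiordanElem K)).g_one]
        · exact (congrFun (congrArg Prod.snd hTeq') ⟨j, by omega, hj⟩).symm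
      rw [← RiordanElem.mul_g, ← hv]
      exact hco
  have hsurj : Function.Surjective F := by
    rintro ⟨a, b⟩
    set hps : PowerSeries K := PowerSeries.mk fun i =>
      if i = 0 then 1 else if hi : 0 < i ∧ i < n then a ⟨i, hi⟩ else 0 with hhps
    set gps : PowerSeries K := PowerSeries.mk fun j =>
      if j = 1 then 1 else if hj : 1 < j ∧ j ≤ n then b ⟨j, hj⟩ else 0 with hgps
    have h1 : constantCoeff hps = 1 := by
      rw [hhps, ← coeff_zero_eq_constantCoeff_apply, coeff_mk, if_pos rfl]
    have h2 : constantCoeff gps = 0 := by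
      rw [hgps, ← coeff_zero_eq_constantCoeff_apply, coeff_mk, if_neg (by norm_num),
        dif_neg (by omega)]
    have h3 : coeff 1 gps = 1 := by
      rw [hgps, coeff_mk, if_pos rfl]
    obtain ⟨uu, huu⟩ := riordan_isUnit (⟨hps, gps, h1, h2, h3⟩ : RiordanElem K)
    refine ⟨QuotientGroup.mk uu, ?_⟩
    have hFu : F (QuotientGroup.mk uu) = T uu := rfl
    rw [hFu, hT]
    refine Prod.ext ?_ ?_
    · funext i
      rcases i with ⟨i, hi⟩
      show coeff i ((uu : RiordanElem K)).h = a ⟨i, hi⟩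
      rw [huu]
      show coeff i hps = a ⟨i, hi⟩
      rw [hhps, coeff_mk, if_neg (by omega), dif_pos hi]
    · funext j
      rcases j with ⟨j, hj⟩
      show coeff j ((uu : RiordanElem K)).g = b ⟨j, hj⟩
      rw [huu]
      show coeff j gps = b ⟨j, hj⟩
      rw [hgps, coeff_mk, if_neg (by omega), dif_pos hj]
  exact ⟨Equiv.ofBijective F ⟨hinj, hsurj⟩⟩


/-- for a finite commutative unital ring `K` the quotients `R(K)/R^n(K)` are
finite, and for a finite field of characteristic `p` their orders are powers of `p`. -/
theorem riordan_quotients_finite (p : ℕ) (hp : p.Prime) :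
    (∀ (K : Type) [CommRing K] [Finite K] (n : ℕ)
      (Hn : Subgroup (RiordanGroup K)), (Hn : Set (RiordanGroup K)) = Rn K n →
        Finite (RiordanGroup K ⧸ Hn)) ∧
    (∀ (K : Type) [Field K] [Finite K] [CharP K p] (n : ℕ)
      (Hn : Subgroup (RiordanGroup K)), (Hn : Set (RiordanGroup K)) = Rn K n →
        ∃ k : ℕ, Nat.card (RiordanGroup K ⧸ Hn) = p ^ k) := by
  constructor
  · intro K _ _ n Hn hcar
    obtain ⟨e⟩ := quotient_equiv K n Hn hcar
    haveI f1 : Finite {i : ℕ // 0 < i ∧ i < n} :=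
      Finite.of_injective (fun i => (⟨i.1, i.2.2⟩ : Fin n))
        (fun x y h => Subtype.ext (congrArg Fin.val h))
    haveI f2 : Finite {j : ℕ // 1 < j ∧ j ≤ n} :=
      Finite.of_injective (fun j => (⟨j.1, Nat.lt_succ_of_le j.2.2⟩ : Fin (n + 1)))
        (fun x y h => Subtype.ext (congrArg Fin.val h))
    exact Finite.of_equiv _ e.symm
  · intro K _ _ _ n Hn hcar
    obtain ⟨e⟩ := quotient_equiv K n Hn hcar
    haveI f1 : Finite {i : ℕ // 0 < i ∧ i < n} :=
      Finite.of_injective (fun i => (⟨i.1, i.2.2⟩ : Fin n))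
        (fun x y h => Subtype.ext (congrArg Fin.val h))
    haveI f2 : Finite {j : ℕ // 1 < j ∧ j ≤ n} :=
      Finite.of_injective (fun j => (⟨j.1, Nat.lt_succ_of_le j.2.2⟩ : Fin (n + 1)))
        (fun x y h => Subtype.ext (congrArg Fin.val h))
    haveI : Fintype K := Fintype.ofFinite K
    obtain ⟨m, _, hcard⟩ := FiniteField.card K p
    refine ⟨(m : ℕ) * Nat.card {i : ℕ // 0 < i ∧ i < n}
      + (m : ℕ) * Nat.card {j : ℕ // 1 < j ∧ j ≤ n}, ?_⟩
    rw [Nat.card_congr e, Nat.card_prod, Nat.card_fun, Nat.card_fun,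
      Nat.card_eq_fintype_card (α := K), hcard, pow_add, pow_mul, pow_mul]


end RiordanPaper
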